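/- If G is a connected graph of order n ≥ 3, then √((n−1)² + 1) ≤ cDSO(G) ≤ n(n−1)/√2, with left equality if and only if G ≅ S_n and right equality if and only if G ≅ K_n. -/

import Mathlib

open SimpleGraph Finset Real

noncomputable def HSO {V : Type*} [Fintype V] (G : SimpleGraph V) : ℝ :=
  letI := Classical.decRel G.Adj
  ∑ e ∈ G.edgeFinset, Sym2.lift
    ⟨fun x y => Real.sqrt ((G.degree x : ℝ) ^ 2 + (G.degree y : ℝ) ^ 2) /
      min (G.degree x : ℝ) (G.degree y : ℝ),
     fun x y => by simp [add_comm, min_comm]⟩ e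

noncomputable def SO {V : Type*} [Fintype V] (G : SimpleGraph V) : ℝ :=
  letI := Classical.decRel G.Adj
  ∑ e ∈ G.edgeFinset, Sym2.lift
    ⟨fun x y => Real.sqrt ((G.degree x : ℝ) ^ 2 + (G.degree y : ℝ) ^ 2),
     fun x y => by simp [add_comm]⟩ e

noncomputable def cDSO {V : Type*} [Fintype V] (G : SimpleGraph V) : ℝ :=
  letI := Classical.decRel G.Adj
  ∑ e ∈ G.edgeFinset, Sym2.lift
    ⟨fun x y => Real.sqrt ((G.degree x : ℝ) ^ 2 + (G.degree y : ℝ) ^ 2) /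
      max (G.degree x : ℝ) (G.degree y : ℝ),
     fun x y => by simp [add_comm, max_comm]⟩ e

noncomputable def M1 {V : Type*} [Fintype V] (G : SimpleGraph V) : ℝ :=
  letI := Classical.decRel G.Adj
  ∑ e ∈ G.edgeFinset, Sym2.lift
    ⟨fun x y => (G.degree x : ℝ) + (G.degree y : ℝ),
     fun x y => by simp [add_comm]⟩ e

def IsRegularGraph {V : Type*} [Fintype V] (G : SimpleGraph V) : Prop :=
  letI := Classical.decRel G.Adj
  ∃ k, G.IsRegularOfDegree k

def addEdge {V : Type*} (G : SimpleGraph V) (u v : V) : SimpleGraph V :=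
  G ⊔ SimpleGraph.fromEdgeSet {s(u, v)}

/-! ### Auxiliary real-analysis lemmas -/

lemma term_le {a b : ℝ} (ha : 0 < a) (hab : a ≤ b) :
    Real.sqrt (a^2 + b^2) / b ≤ Real.sqrt 2 := by
  have hb : 0 < b := lt_of_lt_of_le ha hab
  rw [div_le_iff₀ hb]
  calc Real.sqrt (a^2+b^2) ≤ Real.sqrt (2*b^2) := by
        apply Real.sqrt_le_sqrt; nlinarith
    _ = Real.sqrt 2 * b := by
        rw [Real.sqrt_mul (by norm_num), Real.sqrt_sq hb.le]

lemma term_ge {a b N : ℝ} (h1 : 1 ≤ a) (hab : a ≤ b) (hbN : b ≤ N) :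
    Real.sqrt (N^2 + 1) / N ≤ Real.sqrt (a^2 + b^2) / b := by
  have hb : 0 < b := lt_of_lt_of_le (by linarith) hab
  have hN : 0 < N := lt_of_lt_of_le hb hbN
  rw [div_le_div_iff₀ hN hb]
  have key : Real.sqrt (N ^ 2 + 1) * b = Real.sqrt ((N^2+1) * b^2) := by
    rw [Real.sqrt_mul (by positivity), Real.sqrt_sq hb.le]
  have key2 : Real.sqrt (a ^ 2 + b^2) * N = Real.sqrt ((a^2+b^2) * N^2) := by
    rw [Real.sqrt_mul (by positivity), Real.sqrt_sq hN.le]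
  rw [key, key2]
  apply Real.sqrt_le_sqrt
  have hba : b ≤ a * N := by nlinarith
  nlinarith [mul_self_le_mul_self hb.le hba]

lemma term_ge_eq_iff {a b N : ℝ} (h1 : 1 ≤ a) (hab : a ≤ b) (hbN : b ≤ N) (hN2 : 2 ≤ N) :
    Real.sqrt (a^2 + b^2) / b = Real.sqrt (N^2 + 1) / N ↔ (a = 1 ∧ b = N) := by
  have hb : 0 < b := lt_of_lt_of_le (by linarith) hab
  have hN : 0 < N := by linarith
  constructor
  · intro h
    rw [div_eq_div_iff hb.ne' hN.ne'] at h
    have h2 : (a^2+b^2) * N^2 = (N^2+1) * b^2 := by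
      have := congrArg (· ^ 2) h
      simp only [mul_pow] at this
      rw [Real.sq_sqrt (by positivity), Real.sq_sqrt (by positivity)] at this
      linarith [this]
    have h3 : a * N = b := by nlinarith
    constructor
    · nlinarith
    · nlinarith
  · rintro ⟨rfl, rfl⟩
    rw [add_comm]; norm_num

lemma term_bounds {x y N : ℝ} (hx : 1 ≤ x) (hy : 1 ≤ y) (hxN : x ≤ N) (hyN : y ≤ N)
    (hN2 : 2 ≤ N) :
    (Real.sqrt (N^2+1)/N ≤ Real.sqrt (x^2+y^2)/max x y) ∧
    (Real.sqrt (x^2+y^2)/max x y ≤ Real.sqrt 2) ∧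
    (Real.sqrt (x^2+y^2)/max x y = Real.sqrt (N^2+1)/N ↔ (min x y = 1 ∧ max x y = N)) := by
  rcases le_total x y with hxy | hxy
  · rw [max_eq_right hxy, min_eq_left hxy]
    exact ⟨term_ge hx hxy hyN, term_le (by linarith) hxy, term_ge_eq_iff hx hxy hyN hN2⟩
  · rw [max_eq_left hxy, min_eq_right hxy, add_comm (x^2)]
    exact ⟨term_ge hy hxy hxN, term_le (by linarith) hxy, term_ge_eq_iff hy hxy hxN hN2⟩

/-! ### A connected graph has at least `card V - 1` edges -/

lemma conn_card_le {V : Type*} [Fintype V] (G : SimpleGraph V) [DecidableRel G.Adj]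
    (hconn : G.Connected) : Fintype.card V ≤ G.edgeFinset.card + 1 := by
  classical
  have hne := hconn.nonempty
  inhabit V
  set r : V := default with hr
  choose p hp using fun w (h : w ≠ r) => (hconn w r).exists_walk_length_eq_dist
  have hdist : ∀ w, w ≠ r → 0 < G.dist w r := by
    intro w hw
    exact (hconn w r).pos_dist_of_ne hw
  have hnil : ∀ w (h : w ≠ r), ¬ (p w h).Nil := fun w h => Walk.not_nil_of_ne h
  have key2 : ∀ x (hx : x ≠ r) y, (p x hx).getVert 1 = y → G.dist y r < G.dist x r := by
    intro x hx y hxy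
    have h1 := Walk.length_tail_add_one (hnil x hx)
    have hle : G.dist y r ≤ ((p x hx).tail.copy hxy rfl).length := G.dist_le _
    rw [Walk.length_copy] at hle
    have := hp x hx
    omega
  have hcard : (Finset.univ.erase r).card ≤ G.edgeFinset.card := by
    apply Finset.card_le_card_of_injOn
      (fun w => if h : w ≠ r then ((p w h).firstDart (hnil w h)).edge else default)
    · intro w hw
      have hwr : w ≠ r := Finset.ne_of_mem_erase (Finset.mem_coe.mp hw)
      dsimp only
      rw [dif_pos hwr]
      simp [SimpleGraph.mem_edgeFinset]
    · intro a ha b hb hab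
      have har : a ≠ r := Finset.ne_of_mem_erase (Finset.mem_coe.mp ha)
      have hbr : b ≠ r := Finset.ne_of_mem_erase (Finset.mem_coe.mp hb)
      dsimp only at hab
      rw [dif_pos har, dif_pos hbr, SimpleGraph.dart_edge_eq_iff] at hab
      rcases hab with hab | hab
      · simpa using congrArg (·.fst) hab
      · have h1 : a = (p b hbr).getVert 1 := by
          simpa [SimpleGraph.Dart.symm, SimpleGraph.Walk.firstDart] using congrArg (·.fst) hab
        have h2 : (p a har).getVert 1 = b := by
          simpa [SimpleGraph.Dart.symm, SimpleGraph.Walk.firstDart] using congrArg (·.snd) hab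
        have k1 := key2 a har b h2
        have k2 := key2 b hbr a h1.symm
        omega
  have hc1 : (Finset.univ.erase r).card = Fintype.card V - 1 := by
    rw [Finset.card_erase_of_mem (Finset.mem_univ r), Finset.card_univ]
  have hpos : 0 < Fintype.card V := Fintype.card_pos
  omega

/-! ### The summand of `cDSO`, stated with an ambient decidability instance -/

noncomputable def liftTerm {V : Type*} [Fintype V] (G : SimpleGraph V) [DecidableRel G.Adj] :
    Sym2 V → ℝ :=
  Sym2.lift
    ⟨fun x y => Real.sqrt ((G.degree x : ℝ) ^ 2 + (G.degree y : ℝ) ^ 2) /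
      max (G.degree x : ℝ) (G.degree y : ℝ),
     fun x y => by simp [add_comm, max_comm]⟩

lemma liftTerm_mk {V : Type*} [Fintype V] (G : SimpleGraph V) [DecidableRel G.Adj] (u v : V) :
    liftTerm G s(u, v) = Real.sqrt ((G.degree u : ℝ) ^ 2 + (G.degree v : ℝ) ^ 2) /
      max (G.degree u : ℝ) (G.degree v : ℝ) := by
  rw [liftTerm, Sym2.lift_mk]

lemma cDSO_spec {V : Type*} [Fintype V] (G : SimpleGraph V) [DecidableRel G.Adj] :
    cDSO G = ∑ e ∈ G.edgeFinset, liftTerm G e := by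
  unfold cDSO liftTerm
  congr!

/-! ### Star graphs -/

def starProp {V : Type*} (G : SimpleGraph V) (w : V) : Prop :=
  ∀ a b, G.Adj a b ↔ (a = w ∧ b ≠ w) ∨ (b = w ∧ a ≠ w)

section
variable {V : Type*} [Fintype V] [DecidableEq V] (G : SimpleGraph V) [DecidableRel G.Adj]

set_option linter.unusedSectionVars false

lemma star_nbhd_center {w : V} (h : starProp G w) :
    G.neighborFinset w = Finset.univ.erase w := by
  ext v; simp [SimpleGraph.mem_neighborFinset, h w v, eq_comm]

lemma star_nbhd_leaf {w v : V} (h : starProp G w) (hv : v ≠ w) :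
    G.neighborFinset v = {w} := by
  ext x; simp [SimpleGraph.mem_neighborFinset, h v x, hv]

lemma star_degree_center {w : V} (h : starProp G w) :
    G.degree w = Fintype.card V - 1 := by
  rw [← SimpleGraph.card_neighborFinset_eq_degree, star_nbhd_center G h,
    Finset.card_erase_of_mem (Finset.mem_univ w), Finset.card_univ]

lemma star_degree_leaf {w v : V} (h : starProp G w) (hv : v ≠ w) :
    G.degree v = 1 := by
  rw [← SimpleGraph.card_neighborFinset_eq_degree, star_nbhd_leaf G h hv,
    Finset.card_singleton]

lemma star_card_edges {w : V} (h : starProp G w) :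
    G.edgeFinset.card = Fintype.card V - 1 := by
  have hh := G.sum_degrees_eq_twice_card_edges
  rw [← Finset.add_sum_erase _ _ (Finset.mem_univ w)] at hh
  have h2 : ∑ v ∈ Finset.univ.erase w, G.degree v = Fintype.card V - 1 := by
    rw [Finset.sum_congr rfl fun v hv => star_degree_leaf G h (Finset.mem_erase.mp hv).1]
    simp [Finset.card_erase_of_mem, Finset.card_univ]
  rw [h2, star_degree_center G h] at hh
  have : 0 < Fintype.card V := Fintype.card_pos_iff.mpr ⟨w⟩
  omega

lemma star_cDSO {w : V} (h : starProp G w) (h3 : 3 ≤ Fintype.card V) :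
    cDSO G = Real.sqrt (((Fintype.card V : ℝ) - 1) ^ 2 + 1) := by
  have hNcast : ((Fintype.card V - 1 : ℕ) : ℝ) = (Fintype.card V : ℝ) - 1 := by
    have : (1:ℕ) ≤ Fintype.card V := by omega
    push_cast [this]
    ring
  set N : ℝ := (Fintype.card V : ℝ) - 1 with hNdef
  have hN1 : (1:ℝ) ≤ N := by
    have : (3:ℝ) ≤ (Fintype.card V : ℝ) := by exact_mod_cast h3
    rw [hNdef]; linarith
  have hN0 : N ≠ 0 := by linarith
  have hdw : (G.degree w : ℝ) = N := by rw [star_degree_center G h, hNcast]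
  rw [cDSO_spec]
  have hterm : ∀ e ∈ G.edgeFinset, liftTerm G e = Real.sqrt (N^2 + 1) / N := by
    intro e he
    induction e using Sym2.ind with
    | _ u v =>
      have hadj : G.Adj u v := by rwa [SimpleGraph.mem_edgeFinset, SimpleGraph.mem_edgeSet] at he
      rw [liftTerm_mk]
      rcases (h u v).mp hadj with ⟨rfl, hv⟩ | ⟨rfl, hu⟩
      · rw [hdw, show (G.degree v : ℝ) = 1 by rw [star_degree_leaf G h hv]; norm_num,
          max_eq_left hN1]
        norm_num
      · rw [hdw, show (G.degree u : ℝ) = 1 by rw [star_degree_leaf G h hu]; norm_num,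
          max_eq_right hN1]
        rw [add_comm]
        norm_num
  rw [Finset.sum_congr rfl hterm, Finset.sum_const, star_card_edges G h, nsmul_eq_mul, hNcast]
  rw [mul_comm, div_mul_cancel₀ _ hN0]

lemma top_cDSO (h : ∀ a b : V, G.Adj a b ↔ a ≠ b) (h3 : 3 ≤ Fintype.card V) :
    cDSO G = (Fintype.card V : ℝ) * ((Fintype.card V : ℝ) - 1) / Real.sqrt 2 := by
  have hNcast : ((Fintype.card V - 1 : ℕ) : ℝ) = (Fintype.card V : ℝ) - 1 := by
    have : (1:ℕ) ≤ Fintype.card V := by omega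
    push_cast [this]
    ring
  set N : ℝ := (Fintype.card V : ℝ) - 1 with hNdef
  have hN1 : (1:ℝ) ≤ N := by
    have : (3:ℝ) ≤ (Fintype.card V : ℝ) := by exact_mod_cast h3
    rw [hNdef]; linarith
  have hN0 : 0 < N := by linarith
  have hdeg : ∀ v : V, (G.degree v : ℝ) = N := by
    intro v
    have : G.neighborFinset v = Finset.univ.erase v := by
      ext x; simp [SimpleGraph.mem_neighborFinset, h v x, eq_comm]
    rw [← SimpleGraph.card_neighborFinset_eq_degree, this,
      Finset.card_erase_of_mem (Finset.mem_univ v), Finset.card_univ, hNcast]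
  have hG : G = ⊤ := by
    ext a b; simp [h a b]
  have hcard : G.edgeFinset.card = (Fintype.card V).choose 2 := by
    rw [← card_edgeFinset_top_eq_card_choose_two (V := V)]
    apply Finset.card_nbij id
    · intro e he; simpa [hG] using he
    · intro a _ b _ hab; exact hab
    · intro e he; exact ⟨e, by simpa [hG] using he, rfl⟩
  rw [cDSO_spec]
  have hterm : ∀ e ∈ G.edgeFinset, liftTerm G e = Real.sqrt 2 := by
    intro e he
    induction e using Sym2.ind with
    | _ u v =>
      rw [liftTerm_mk]
      rw [hdeg u, hdeg v, max_self]
      rw [show N^2 + N^2 = 2 * N^2 by ring, Real.sqrt_mul (by norm_num), Real.sqrt_sq hN0.le,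
        mul_div_assoc, div_self hN0.ne', mul_one]
  rw [Finset.sum_congr rfl hterm, Finset.sum_const, hcard, nsmul_eq_mul,
    Nat.cast_choose_two ℝ]
  have h2 : Real.sqrt 2 * Real.sqrt 2 = 2 := Real.mul_self_sqrt (by norm_num)
  rw [eq_div_iff (by positivity : Real.sqrt 2 ≠ 0), mul_assoc, h2]
  ring

end

lemma star_iso {V : Type*} [Fintype V] (G : SimpleGraph V) {w : V} (h : starProp G w)
    {n : ℕ} (hn : n = Fintype.card V) :
    Nonempty (G ≃g completeBipartiteGraph (Fin 1) (Fin (n - 1))) := by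
  classical
  have c1 : Fintype.card {x : V // x = w} = 1 := Fintype.card_subtype_eq w
  have c2 : Fintype.card {x : V // ¬ x = w} = n - 1 := by
    rw [Fintype.card_subtype_compl, Fintype.card_subtype_eq, hn]
  let e1 : {x : V // x = w} ≃ Fin 1 := Fintype.equivFinOfCardEq c1
  let e2 : {x : V // ¬ x = w} ≃ Fin (n-1) := Fintype.equivFinOfCardEq c2
  let φ : V ≃ (Fin 1 ⊕ Fin (n-1)) :=
    ((Equiv.sumCompl (· = w)).symm).trans (Equiv.sumCongr e1 e2)
  have hφpos : ∀ (x : V) (hx : x = w), φ x = Sum.inl (e1 ⟨x, hx⟩) := by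
    intro x hx
    simp only [φ, Equiv.trans_apply, Equiv.sumCongr_apply]
    rw [Equiv.sumCompl_symm_apply_of_pos (p := fun y => y = w) hx]
    rfl
  have hφneg : ∀ (x : V) (hx : ¬ x = w), φ x = Sum.inr (e2 ⟨x, hx⟩) := by
    intro x hx
    simp only [φ, Equiv.trans_apply, Equiv.sumCongr_apply]
    rw [Equiv.sumCompl_symm_apply_of_neg (p := fun y => y = w) hx]
    rfl
  refine ⟨⟨φ, ?_⟩⟩
  intro a b
  show (φ a).isLeft ∧ (φ b).isRight ∨ (φ a).isRight ∧ (φ b).isLeft ↔ G.Adj a b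
  rw [h a b]
  by_cases ha : a = w <;> by_cases hb : b = w <;>
    simp [hφpos, hφneg, ha, hb]

lemma starProp_of_iso {V : Type*} [Fintype V] (G : SimpleGraph V) {m : ℕ}
    (F : G ≃g completeBipartiteGraph (Fin 1) (Fin m)) :
    starProp G (F.symm (Sum.inl 0)) := by
  intro a b
  set w := F.symm (Sum.inl 0) with hw
  have hinl : ∀ (x : V) (z : Fin 1), F x = Sum.inl z ↔ x = w := by
    intro x z
    have hz : z = 0 := Subsingleton.elim _ _
    subst hz
    constructor
    · intro hx
      rw [hw, ← hx, RelIso.symm_apply_apply]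
    · rintro rfl
      rw [hw, RelIso.apply_symm_apply]
  have hinr : ∀ (x : V) (z : Fin m), F x = Sum.inr z → x ≠ w := by
    intro x z hx hxw
    rw [(hinl x 0).mpr hxw] at hx
    simp at hx
  rw [← F.map_adj_iff]
  rcases hFa : F a with za | za <;> rcases hFb : F b with zb | zb
  · have ha := (hinl a za).mp hFa
    have hb := (hinl b zb).mp hFb
    simp [completeBipartiteGraph, ha, hb]
  · have ha := (hinl a za).mp hFa
    have hb := hinr b zb hFb
    simp [completeBipartiteGraph, ha, hb]
  · have ha := hinr a za hFa
    have hb := (hinl b zb).mp hFb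
    simp [completeBipartiteGraph, ha, hb]
  · have ha := hinr a za hFa
    have hb := hinr b zb hFb
    simp [completeBipartiteGraph, ha, hb]

theorem stmt13 {V : Type*} [Fintype V] (G : SimpleGraph V) [DecidableRel G.Adj]
    (n : ℕ) (hn : n = Fintype.card V) (hn3 : 3 ≤ n) (hconn : G.Connected) :
    Real.sqrt (((n : ℝ) - 1) ^ 2 + 1) ≤ cDSO G ∧
    cDSO G ≤ (n : ℝ) * ((n : ℝ) - 1) / Real.sqrt 2 ∧
    (cDSO G = Real.sqrt (((n : ℝ) - 1) ^ 2 + 1) ↔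
      Nonempty (G ≃g completeBipartiteGraph (Fin 1) (Fin (n - 1)))) ∧
    (cDSO G = (n : ℝ) * ((n : ℝ) - 1) / Real.sqrt 2 ↔
      Nonempty (G ≃g (⊤ : SimpleGraph (Fin n)))) := by
  classical
  set N : ℝ := (n : ℝ) - 1 with hNdef
  have hn3R : (3:ℝ) ≤ (n:ℝ) := by exact_mod_cast hn3
  have hN2 : 2 ≤ N := by rw [hNdef]; linarith
  have hN0 : 0 < N := by linarith
  set c : ℝ := Real.sqrt (N^2 + 1) / N with hcdef
  have hc0 : 0 < c := div_pos (Real.sqrt_pos.mpr (by positivity)) hN0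
  have hNc : N * c = Real.sqrt (N^2 + 1) := by
    rw [hcdef, mul_comm, div_mul_cancel₀ _ hN0.ne']
  -- degree facts
  have hdge1 : ∀ {u v : V}, G.Adj u v → (1:ℝ) ≤ (G.degree u : ℝ) := by
    intro u v huv
    have : 0 < G.degree u := by rw [G.degree_pos_iff_exists_adj]; exact ⟨v, huv⟩
    exact_mod_cast this
  have hdleN : ∀ u : V, (G.degree u : ℝ) ≤ N := by
    intro u
    have h1 : G.degree u < Fintype.card V := G.degree_lt_card_verts u
    have h2 : G.degree u + 1 ≤ n := by omega
    have h3 : (G.degree u : ℝ) + 1 ≤ (n : ℝ) := by exact_mod_cast h2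
    rw [hNdef]; linarith
  -- per edge bounds
  have hlow : ∀ e ∈ G.edgeFinset, c ≤ liftTerm G e := by
    intro e he
    induction e using Sym2.ind with
    | _ u v =>
      have hadj : G.Adj u v := by rwa [SimpleGraph.mem_edgeFinset, SimpleGraph.mem_edgeSet] at he
      rw [liftTerm_mk, hcdef]
      exact (term_bounds (hdge1 hadj) (hdge1 hadj.symm) (hdleN u) (hdleN v) hN2).1
  have hhigh : ∀ e ∈ G.edgeFinset, liftTerm G e ≤ Real.sqrt 2 := by
    intro e he
    induction e using Sym2.ind with
    | _ u v =>
      have hadj : G.Adj u v := by rwa [SimpleGraph.mem_edgeFinset, SimpleGraph.mem_edgeSet] at he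
      rw [liftTerm_mk]
      exact (term_bounds (hdge1 hadj) (hdge1 hadj.symm) (hdleN u) (hdleN v) hN2).2.1
  -- edge count bounds
  have hm_lb : n ≤ G.edgeFinset.card + 1 := by
    have := conn_card_le G hconn; omega
  have hm_ub : G.edgeFinset.card ≤ n.choose 2 := by
    have := G.card_edgeFinset_le_card_choose_two
    rw [← hn] at this; exact this
  have hmR : N ≤ (G.edgeFinset.card : ℝ) := by
    have : (n : ℝ) ≤ (G.edgeFinset.card : ℝ) + 1 := by exact_mod_cast hm_lb
    rw [hNdef]; linarith
  have hchooseR : ((n.choose 2 : ℕ) : ℝ) = (n:ℝ) * N / 2 := by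
    rw [Nat.cast_choose_two ℝ, hNdef]
  have hsqrt2 : Real.sqrt 2 * Real.sqrt 2 = 2 := Real.mul_self_sqrt (by norm_num)
  have htop : ((n.choose 2 : ℕ) : ℝ) * Real.sqrt 2 = (n:ℝ) * N / Real.sqrt 2 := by
    rw [hchooseR, eq_div_iff (by positivity : Real.sqrt 2 ≠ 0), mul_assoc, hsqrt2]
    ring
  -- sum bounds
  have hsum_low : (G.edgeFinset.card : ℝ) * c ≤ cDSO G := by
    rw [cDSO_spec]
    calc (G.edgeFinset.card : ℝ) * c = ∑ _e ∈ G.edgeFinset, c := by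
          rw [Finset.sum_const, nsmul_eq_mul]
      _ ≤ ∑ e ∈ G.edgeFinset, liftTerm G e := Finset.sum_le_sum hlow
  have hsum_high : cDSO G ≤ (G.edgeFinset.card : ℝ) * Real.sqrt 2 := by
    rw [cDSO_spec]
    calc ∑ e ∈ G.edgeFinset, liftTerm G e ≤ ∑ _e ∈ G.edgeFinset, Real.sqrt 2 :=
          Finset.sum_le_sum hhigh
      _ = (G.edgeFinset.card : ℝ) * Real.sqrt 2 := by rw [Finset.sum_const, nsmul_eq_mul]
  have hlower : Real.sqrt (N^2 + 1) ≤ cDSO G := by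
    rw [← hNc]
    calc N * c ≤ (G.edgeFinset.card : ℝ) * c := mul_le_mul_of_nonneg_right hmR hc0.le
      _ ≤ cDSO G := hsum_low
  have hupper : cDSO G ≤ (n:ℝ) * N / Real.sqrt 2 := by
    calc cDSO G ≤ (G.edgeFinset.card : ℝ) * Real.sqrt 2 := hsum_high
      _ ≤ ((n.choose 2 : ℕ) : ℝ) * Real.sqrt 2 := by
          apply mul_le_mul_of_nonneg_right _ (by positivity)
          exact_mod_cast hm_ub
      _ = (n:ℝ) * N / Real.sqrt 2 := htop
  refine ⟨hlower, hupper, ?_, ?_⟩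
  · -- lower equality iff star
    constructor
    · intro heq
      -- each term equals c
      have hSS : ∑ _e ∈ G.edgeFinset, c = ∑ e ∈ G.edgeFinset, liftTerm G e := by
        apply le_antisymm (Finset.sum_le_sum hlow)
        have h1 : ∑ e ∈ G.edgeFinset, liftTerm G e = N * c := by
          rw [← cDSO_spec, heq, hNc]
        have h2 : ∑ _e ∈ G.edgeFinset, c = (G.edgeFinset.card : ℝ) * c := by
          rw [Finset.sum_const, nsmul_eq_mul]
        rw [h1, h2]
        exact mul_le_mul_of_nonneg_right hmR hc0.le
      have hpt : ∀ e ∈ G.edgeFinset, c = liftTerm G e :=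
        (Finset.sum_eq_sum_iff_of_le hlow).mp hSS
      have hedge : ∀ {u v : V}, G.Adj u v →
          (min (G.degree u : ℝ) (G.degree v : ℝ) = 1 ∧
           max (G.degree u : ℝ) (G.degree v : ℝ) = N) := by
        intro u v huv
        have he : s(u,v) ∈ G.edgeFinset := by
          rw [SimpleGraph.mem_edgeFinset, SimpleGraph.mem_edgeSet]; exact huv
        have h1 := (hpt _ he).symm
        rw [liftTerm_mk, hcdef] at h1
        exact ((term_bounds (hdge1 huv) (hdge1 huv.symm) (hdleN u) (hdleN v) hN2).2.2).mp h1
      -- find a vertex of degree n - 1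
      have hm_pos : 0 < G.edgeFinset.card := by omega
      obtain ⟨e0, he0⟩ := Finset.card_pos.mp hm_pos
      obtain ⟨w, hwdeg⟩ : ∃ w : V, (G.degree w : ℝ) = N := by
        induction e0 using Sym2.ind with
        | _ u v =>
          have hadj : G.Adj u v := by
            rwa [SimpleGraph.mem_edgeFinset, SimpleGraph.mem_edgeSet] at he0
          obtain ⟨_, hmax⟩ := hedge hadj
          rcases max_choice ((G.degree u : ℝ)) ((G.degree v : ℝ)) with h | h <;>
            rw [h] at hmax
          · exact ⟨u, hmax⟩
          · exact ⟨v, hmax⟩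
      have hwdegn : G.degree w = n - 1 := by
        have hcast : ((n - 1 : ℕ) : ℝ) = N := by
          rw [hNdef]
          have : (1:ℕ) ≤ n := by omega
          push_cast [this]; ring
        have : (G.degree w : ℝ) = ((n - 1 : ℕ) : ℝ) := by rw [hwdeg, hcast]
        exact_mod_cast this
      -- w is adjacent to everything else
      have hwadj : ∀ x, x ≠ w → G.Adj w x := by
        have hsub : G.neighborFinset w ⊆ Finset.univ.erase w := by
          intro x hx
          rw [Finset.mem_erase]
          exact ⟨((SimpleGraph.mem_neighborFinset _ _ _).mp hx).ne', Finset.mem_univ x⟩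
        have hcards : (Finset.univ.erase w).card ≤ (G.neighborFinset w).card := by
          rw [SimpleGraph.card_neighborFinset_eq_degree, hwdegn,
            Finset.card_erase_of_mem (Finset.mem_univ w), Finset.card_univ, ← hn]
        have heqset := Finset.eq_of_subset_of_card_le hsub hcards
        intro x hx
        have : x ∈ G.neighborFinset w := by
          rw [heqset]; exact Finset.mem_erase.mpr ⟨hx, Finset.mem_univ x⟩
        exact (SimpleGraph.mem_neighborFinset _ _ _).mp this
      -- every other vertex has degree 1
      have hdeg1 : ∀ x, x ≠ w → G.degree x = 1 := by
        intro x hx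
        have hadjwx := hwadj x hx
        obtain ⟨hmin', _⟩ := hedge hadjwx
        have : (G.degree x : ℝ) = 1 := by
          rcases min_choice ((G.degree w : ℝ)) ((G.degree x : ℝ)) with h | h <;>
            rw [h] at hmin'
          · rw [hwdeg] at hmin'; linarith
          · exact hmin'
        exact_mod_cast this
      have hstar : starProp G w := by
        intro a b
        constructor
        · intro hab
          by_cases ha : a = w
          · exact Or.inl ⟨ha, fun hb => hab.ne (ha.trans hb.symm)⟩
          · by_cases hb : b = w
            · exact Or.inr ⟨hb, ha⟩
            · exfalso
              have h1 : G.degree a = 1 := hdeg1 a ha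
              have hw_mem : w ∈ G.neighborFinset a :=
                (SimpleGraph.mem_neighborFinset _ _ _).mpr (hwadj a ha).symm
              have hb_mem : b ∈ G.neighborFinset a :=
                (SimpleGraph.mem_neighborFinset _ _ _).mpr hab
              have hcard1 : (G.neighborFinset a).card = 1 := by
                rw [SimpleGraph.card_neighborFinset_eq_degree, h1]
              obtain ⟨x, hx⟩ := Finset.card_eq_one.mp hcard1
              rw [hx, Finset.mem_singleton] at hw_mem hb_mem
              exact hb (hb_mem.trans hw_mem.symm)
        · rintro (⟨rfl, hb⟩ | ⟨rfl, ha⟩)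
          · exact hwadj b hb
          · exact (hwadj a ha).symm
      exact star_iso G hstar hn
    · rintro ⟨F⟩
      have hstar := starProp_of_iso G F
      have h1 := star_cDSO G hstar (hn ▸ hn3)
      rw [h1, ← hn]
  · -- upper equality iff complete
    constructor
    · intro heq
      have hm_eq : G.edgeFinset.card = n.choose 2 := by
        by_contra hne
        have hlt : G.edgeFinset.card < n.choose 2 := lt_of_le_of_ne hm_ub hne
        have hltR : (G.edgeFinset.card : ℝ) * Real.sqrt 2 <
            ((n.choose 2 : ℕ) : ℝ) * Real.sqrt 2 := by
          apply mul_lt_mul_of_pos_right _ (by positivity)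
          exact_mod_cast hlt
        rw [htop, ← heq] at hltR
        linarith [hsum_high]
      have hGtop : G = ⊤ := by
        have hsub : G.edgeFinset ⊆ (⊤ : SimpleGraph V).edgeFinset := by
          intro e he
          induction e using Sym2.ind with
          | _ u v =>
            rw [SimpleGraph.mem_edgeFinset, SimpleGraph.mem_edgeSet] at he ⊢
            exact (SimpleGraph.top_adj u v).mpr he.ne
        have hcards : (⊤ : SimpleGraph V).edgeFinset.card ≤ G.edgeFinset.card := by
          rw [card_edgeFinset_top_eq_card_choose_two, hm_eq, hn]
        have heqE := Finset.eq_of_subset_of_card_le hsub hcards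
        ext a b
        rw [SimpleGraph.top_adj]
        constructor
        · exact G.ne_of_adj
        · intro hab
          have hmem : s(a,b) ∈ (⊤ : SimpleGraph V).edgeFinset := by
            rw [SimpleGraph.mem_edgeFinset, SimpleGraph.mem_edgeSet, SimpleGraph.top_adj]
            exact hab
          rw [← heqE, SimpleGraph.mem_edgeFinset, SimpleGraph.mem_edgeSet] at hmem
          exact hmem
      refine ⟨?_⟩
      rw [hGtop]
      exact Iso.completeGraph (Fintype.equivFinOfCardEq hn.symm)
    · rintro ⟨F⟩
      have htopAdj : ∀ a b : V, G.Adj a b ↔ a ≠ b := by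
        intro a b
        rw [← F.map_adj_iff, SimpleGraph.top_adj]
        constructor
        · intro h hab; exact h (by rw [hab])
        · intro h h'; exact h (F.injective h')
      have h1 := top_cDSO G htopAdj (hn ▸ hn3)
      rw [h1, ← hn]
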